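/- arXiv:2604.16072 — 2 statements merged into one kernel-verified Lean document; each statement's English description precedes it below -/
import Mathlib

section
/- Let T : H₁ → H₂ be a compact operator between Hilbert spaces with singular values s₁ ≥ s₂ ≥ …. Then for every bounded operator A : H₁ → H₂ with rank A ≤ N, ‖T − A‖ ≥ s_{N+1}(T). Consequently inf{‖T − A‖ : rank A ≤ N} = s_{N+1}(T), attained by the truncated singular value expansion. -/
open Finset

section Aux

variable {ι H : Type*} [NormedAddCommGroup H] [InnerProductSpace ℝ H]

lemma aux_inner_sum [DecidableEq ι] {φ : ι → H} (hφ : Orthonormal ℝ φ) (c : ι → ℝ) (F : Finset ι) (m : ι) :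
    (inner ℝ (∑ n ∈ F, c n • φ n) (φ m) : ℝ) = if m ∈ F then c m else 0 := by
  classical
  rw [sum_inner]
  have h := orthonormal_iff_ite.mp hφ
  simp only [real_inner_smul_left, h, mul_ite, mul_one, mul_zero]
  simp [Finset.sum_ite_eq']

lemma aux_norm_sum {φ : ι → H} (hφ : Orthonormal ℝ φ) (c : ι → ℝ) (F : Finset ι) :
    ‖∑ n ∈ F, c n • φ n‖ ^ 2 = ∑ n ∈ F, (c n) ^ 2 := by
  have h := hφ.orthogonalFamily.norm_sum c F
  simpa [LinearIsometry.toSpanSingleton_apply, Real.norm_eq_abs, sq_abs] using h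

end Aux

section Main

variable {H₁ H₂ : Type*}
  [NormedAddCommGroup H₁] [InnerProductSpace ℝ H₁] [CompleteSpace H₁]
  [NormedAddCommGroup H₂] [InnerProductSpace ℝ H₂] [CompleteSpace H₂]

/-- Lower bound: any operator of rank at most `N` is at distance at least `s N` from `T`. -/
lemma aux_lower (T : H₁ →L[ℝ] H₂)
    (s : ℕ → ℝ) (hmono : Antitone s) (hnonneg : ∀ n, 0 ≤ s n)
    (φ : ℕ → H₁) (ψ : ℕ → H₂) (hφ : Orthonormal ℝ φ) (hψ : Orthonormal ℝ ψ)
    (hsvd : ∀ x, T x = ∑' n, (s n * (inner ℝ x (φ n) : ℝ)) • ψ n)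
    (N : ℕ) (A : H₁ →L[ℝ] H₂)
    (hA : Module.rank ℝ (LinearMap.range (A : H₁ →ₗ[ℝ] H₂)) ≤ N) : s N ≤ ‖T - A‖ := by
  classical
  -- the linear map (c_i) ↦ ∑ c_i φ_i from an (N+1)-dimensional space
  set g : (Fin (N + 1) → ℝ) →ₗ[ℝ] H₁ :=
    ∑ i : Fin (N + 1), (LinearMap.proj i).smulRight (φ (i : ℕ)) with hg
  have hgapp : ∀ c, g c = ∑ i : Fin (N + 1), c i • φ (i : ℕ) := by
    intro c
    simp [hg, LinearMap.sum_apply]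
  set f : (Fin (N + 1) → ℝ) →ₗ[ℝ] H₂ := (A : H₁ →ₗ[ℝ] H₂).comp g with hf
  have hninj : ¬ Function.Injective f := by
    intro hinj
    have hinj' : Function.Injective f.rangeRestrict := f.injective_rangeRestrict_iff.2 hinj
    have h3 := LinearMap.lift_rank_le_of_injective f.rangeRestrict hinj'
    rw [rank_fun', Fintype.card_fin] at h3
    have h2 : Module.rank ℝ (LinearMap.range f) ≤
        Module.rank ℝ (LinearMap.range (A : H₁ →ₗ[ℝ] H₂)) :=
      Submodule.rank_mono (by rw [hf]; exact LinearMap.range_comp_le_range g (A : H₁ →ₗ[ℝ] H₂))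
    have h4 := h3.trans (Cardinal.lift_le.mpr (h2.trans hA))
    simp only [Cardinal.lift_natCast, Nat.cast_le] at h4
    omega
  have hker : ∃ c : Fin (N + 1) → ℝ, c ≠ 0 ∧ f c = 0 := by
    rw [← LinearMap.ker_eq_bot] at hninj
    obtain ⟨c, hc, hc0⟩ := Submodule.exists_mem_ne_zero_of_ne_bot hninj
    exact ⟨c, hc0, hc⟩
  obtain ⟨c, hc0, hfc⟩ := hker
  set y : H₁ := g c with hy
  have hAy : A y = 0 := hfc
  -- rewrite y as a sum over `Finset.range (N+1)`
  set c' : ℕ → ℝ := fun n => if h : n < N + 1 then c ⟨n, h⟩ else 0 with hc'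
  have hyc : y = ∑ n ∈ Finset.range (N + 1), c' n • φ n := by
    rw [hy, hgapp, eq_comm, ← Fin.sum_univ_eq_sum_range (fun n => c' n • φ n) (N + 1)]
    refine Finset.sum_congr rfl fun i _ => ?_
    simp [hc', i.isLt, not_lt.mpr i.is_le]
  have hysq : ‖y‖ ^ 2 = ∑ n ∈ Finset.range (N + 1), (c' n) ^ 2 := by
    rw [hyc]; exact aux_norm_sum hφ c' _
  have hy0 : y ≠ 0 := by
    intro h
    apply hc0
    funext i
    have h0 : ∑ n ∈ Finset.range (N + 1), (c' n) ^ 2 = 0 := by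
      rw [← hysq, h, norm_zero]; ring
    have := (Finset.sum_eq_zero_iff_of_nonneg (fun n _ => sq_nonneg (c' n))).1 h0
      (i : ℕ) (Finset.mem_range.2 i.isLt)
    have hci : c' (i : ℕ) = 0 := by
      nlinarith [this]
    simpa [hc', i.isLt] using (by simpa [hc', i.isLt] using hci : ↑i ≤ N → c i = 0) i.is_le
  have hrpos : (0 : ℝ) < ‖y‖ := norm_pos_iff.2 hy0
  set d : ℕ → ℝ := fun n => ‖y‖⁻¹ * c' n with hd
  set x : H₁ := ‖y‖⁻¹ • y with hx
  have hxnorm : ‖x‖ = 1 := by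
    rw [hx, norm_smul, norm_inv, norm_norm, inv_mul_cancel₀ hrpos.ne']
  have hAx : A x = 0 := by rw [hx, map_smul, hAy, smul_zero]
  have hxsum : x = ∑ n ∈ Finset.range (N + 1), d n • φ n := by
    have h1 : x = ‖y‖⁻¹ • ∑ n ∈ Finset.range (N + 1), c' n • φ n := by rw [hx, ← hyc]
    rw [h1, Finset.smul_sum]
    exact Finset.sum_congr rfl fun n _ => by simp [hd, smul_smul]
  have hxin : ∀ m, (inner ℝ x (φ m) : ℝ) = if m ∈ Finset.range (N + 1) then d m else 0 := by
    intro m; rw [hxsum]; exact aux_inner_sum hφ d _ m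
  have hxsq : ∑ n ∈ Finset.range (N + 1), (inner ℝ x (φ n) : ℝ) ^ 2 = 1 := by
    have h1 : ‖x‖ ^ 2 = ∑ n ∈ Finset.range (N + 1), (d n) ^ 2 := by
      rw [hxsum]; exact aux_norm_sum hφ d _
    rw [hxnorm] at h1
    rw [← Finset.sum_congr rfl fun n hn => by rw [hxin n, if_pos hn]]
    · rw [← h1]; ring
  have hTx : T x = ∑ n ∈ Finset.range (N + 1), (s n * (inner ℝ x (φ n) : ℝ)) • ψ n := by
    rw [hsvd x]
    exact tsum_eq_sum fun b hb => by rw [hxin b, if_neg hb, mul_zero, zero_smul]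
  have hTxsq : ‖T x‖ ^ 2 = ∑ n ∈ Finset.range (N + 1), (s n * (inner ℝ x (φ n) : ℝ)) ^ 2 := by
    rw [hTx]; exact aux_norm_sum hψ _ _
  have hlow : s N ^ 2 ≤ ‖T x‖ ^ 2 := by
    rw [hTxsq]
    calc s N ^ 2 = ∑ n ∈ Finset.range (N + 1), s N ^ 2 * (inner ℝ x (φ n) : ℝ) ^ 2 := by
          rw [← Finset.mul_sum, hxsq, mul_one]
      _ ≤ ∑ n ∈ Finset.range (N + 1), (s n * (inner ℝ x (φ n) : ℝ)) ^ 2 := by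
          refine Finset.sum_le_sum fun n hn => ?_
          have hn' : n ≤ N := Nat.lt_succ_iff.1 (Finset.mem_range.1 hn)
          have hsn : s N ≤ s n := hmono hn'
          have : s N ^ 2 ≤ s n ^ 2 := pow_le_pow_left₀ (hnonneg N) hsn 2
          rw [mul_pow]
          exact mul_le_mul_of_nonneg_right this (sq_nonneg _)
  have hTxge : s N ≤ ‖T x‖ := by
    have h1 := Real.sqrt_le_sqrt hlow
    rwa [Real.sqrt_sq (hnonneg N), Real.sqrt_sq (norm_nonneg _)] at h1
  calc s N ≤ ‖T x‖ := hTxge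
    _ = ‖(T - A) x‖ := by rw [ContinuousLinearMap.sub_apply, hAx, sub_zero]
    _ ≤ ‖T - A‖ * ‖x‖ := (T - A).le_opNorm x
    _ = ‖T - A‖ := by rw [hxnorm, mul_one]

end Main

/-- The `(N+1)`-st approximation number (singular value) of a bounded operator:
the distance, in operator norm, to the set of operators of rank at most `N`. -/
noncomputable def approxNum {H₁ H₂ : Type*}
    [NormedAddCommGroup H₁] [NormedSpace ℝ H₁]
    [NormedAddCommGroup H₂] [NormedSpace ℝ H₂]
    (A : H₁ →L[ℝ] H₂) (N : ℕ) : ℝ :=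
  ⨅ T : {T : H₁ →L[ℝ] H₂ // Module.rank ℝ (LinearMap.range (T : H₁ →ₗ[ℝ] H₂)) ≤ N},
    ‖A - (T : H₁ →L[ℝ] H₂)‖

set_option maxHeartbeats 1000000 in
/-- Schmidt–Eckart–Young: for a compact operator `T` with singular
value decomposition `T x = Σₙ sₙ (x, φₙ) ψₙ`, every bounded operator `A` of rank
`≤ N` satisfies `‖T − A‖ ≥ s_N` (0-based `(N+1)`-st singular value), and the
infimum over all such `A` equals `s_N`, attained by the truncated expansion. -/
theorem stmt13 {H₁ H₂ : Type*}
    [NormedAddCommGroup H₁] [InnerProductSpace ℝ H₁] [CompleteSpace H₁]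
    [NormedAddCommGroup H₂] [InnerProductSpace ℝ H₂] [CompleteSpace H₂]
    (T : H₁ →L[ℝ] H₂) (hT : IsCompactOperator T)
    (s : ℕ → ℝ) (hmono : Antitone s) (hnonneg : ∀ n, 0 ≤ s n)
    (φ : ℕ → H₁) (ψ : ℕ → H₂) (hφ : Orthonormal ℝ φ) (hψ : Orthonormal ℝ ψ)
    (hsvd : ∀ x, T x = ∑' n, (s n * (inner ℝ x (φ n) : ℝ)) • ψ n)
    (N : ℕ) :
    (∀ A : H₁ →L[ℝ] H₂,
        Module.rank ℝ (LinearMap.range (A : H₁ →ₗ[ℝ] H₂)) ≤ N → s N ≤ ‖T - A‖) ∧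
    approxNum T N = s N ∧
    (∃ A : H₁ →L[ℝ] H₂,
        Module.rank ℝ (LinearMap.range (A : H₁ →ₗ[ℝ] H₂)) ≤ N ∧
        (∀ x, A x = ∑ n ∈ Finset.range N, (s n * (inner ℝ x (φ n) : ℝ)) • ψ n) ∧
        ‖T - A‖ = s N) := by
  classical
  have part1 : ∀ A : H₁ →L[ℝ] H₂,
      Module.rank ℝ (LinearMap.range (A : H₁ →ₗ[ℝ] H₂)) ≤ N → s N ≤ ‖T - A‖ :=
    fun A hA => aux_lower T s hmono hnonneg φ ψ hφ hψ hsvd N A hA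
  -- truncated expansion
  set B : H₁ →L[ℝ] H₂ :=
    ∑ n ∈ Finset.range N, (s n) • ((innerSL ℝ (φ n)).smulRight (ψ n)) with hBdef
  have hB : ∀ x, B x = ∑ n ∈ Finset.range N, (s n * (inner ℝ x (φ n) : ℝ)) • ψ n := by
    intro x
    rw [hBdef]
    rw [ContinuousLinearMap.sum_apply]
    refine Finset.sum_congr rfl fun n _ => ?_
    simp [ContinuousLinearMap.smulRight_apply, innerSL_apply_apply, real_inner_comm, smul_smul]
  have hBrank : Module.rank ℝ (LinearMap.range (B : H₁ →ₗ[ℝ] H₂)) ≤ N := by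
    have hsub : LinearMap.range (B : H₁ →ₗ[ℝ] H₂) ≤
        Submodule.span ℝ (ψ '' ↑(Finset.range N)) := by
      rintro y ⟨x, rfl⟩
      show B x ∈ _
      rw [hB]
      exact Submodule.sum_mem _ fun n hn =>
        Submodule.smul_mem _ _ (Submodule.subset_span ⟨n, by simpa using hn, rfl⟩)
    calc Module.rank ℝ (LinearMap.range (B : H₁ →ₗ[ℝ] H₂))
        ≤ Module.rank ℝ (Submodule.span ℝ (ψ '' ↑(Finset.range N))) := Submodule.rank_mono hsub
      _ ≤ Cardinal.mk (ψ '' ↑(Finset.range N)) := rank_span_le _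
      _ = (((Finset.range N).image ψ).card : Cardinal) := by
            rw [← Finset.coe_image]
            simp [Cardinal.mk_coe_finset, Nat.Iio_eq_range]
      _ ≤ (N : Cardinal) :=
            Nat.cast_le.mpr (le_trans Finset.card_image_le (by simp))
  -- upper bound on ‖T - B‖
  have hub : ∀ x, ‖(T - B) x‖ ≤ s N * ‖x‖ := by
    intro x
    set a : ℕ → ℝ := fun n => s n * (inner ℝ x (φ n) : ℝ) with ha
    have hsummable : Summable (fun n => a n • ψ n) := by
      have h2 : Summable (fun n => ‖a n‖ ^ 2) := by
        refine Summable.of_nonneg_of_le (fun n => by positivity) (fun n => ?_)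
          (((hφ.inner_products_summable x)).mul_left ((s 0) ^ 2))
        have h3 : ‖a n‖ ^ 2 = (s n) ^ 2 * ‖(inner ℝ (φ n) x : ℝ)‖ ^ 2 := by
          rw [ha]
          simp [mul_pow, Real.norm_eq_abs, sq_abs, real_inner_comm]
        rw [h3]
        exact mul_le_mul_of_nonneg_right
          (pow_le_pow_left₀ (hnonneg n) (hmono (Nat.zero_le n)) 2) (by positivity)
      have := (hψ.orthogonalFamily.summable_iff_norm_sq_summable a).2 h2
      simpa [LinearIsometry.toSpanSingleton_apply] using this
    have hsplit : (T - B) x = ∑' (n : ↥((↑(Finset.range N) : Set ℕ)ᶜ)), a ↑n • ψ ↑n := by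
      have h := Summable.sum_add_tsum_compl (s := Finset.range N) hsummable
      rw [ContinuousLinearMap.sub_apply, hsvd x, hB x]
      rw [← ha] at *
      exact (eq_sub_iff_add_eq'.mpr h).symm
    rw [hsplit]
    -- bound the norm of the tail
    have hbound : ∀ F : Finset ↥((↑(Finset.range N) : Set ℕ)ᶜ),
        ‖∑ i ∈ F, a ↑i • ψ ↑i‖ ≤ s N * ‖x‖ := by
      intro F
      have hψ' : Orthonormal ℝ (fun i : ↥((↑(Finset.range N) : Set ℕ)ᶜ) => ψ ↑i) :=
        hψ.comp _ Subtype.val_injective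
      have hφ' : Orthonormal ℝ (fun i : ↥((↑(Finset.range N) : Set ℕ)ᶜ) => φ ↑i) :=
        hφ.comp _ Subtype.val_injective
      have hsq : ‖∑ i ∈ F, a ↑i • ψ ↑i‖ ^ 2 = ∑ i ∈ F, (a ↑i) ^ 2 :=
        aux_norm_sum hψ' (fun i => a ↑i) F
      have hle : ∑ i ∈ F, (a ↑i) ^ 2 ≤ s N ^ 2 * ‖x‖ ^ 2 := by
        have hbessel : ∑ i ∈ F, ‖(inner ℝ (φ ↑i) x : ℝ)‖ ^ 2 ≤ ‖x‖ ^ 2 :=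
          hφ'.sum_inner_products_le x
        calc ∑ i ∈ F, (a ↑i) ^ 2
            ≤ ∑ i ∈ F, s N ^ 2 * ‖(inner ℝ (φ ↑i) x : ℝ)‖ ^ 2 := by
              refine Finset.sum_le_sum fun i _ => ?_
              have hiN : N ≤ (i : ℕ) := by
                have := i.2
                simp only [Set.mem_compl_iff, Finset.coe_range, Set.mem_Iio, not_lt] at this
                exact this
              have h5 : (a ↑i) ^ 2 = (s ↑i) ^ 2 * ‖(inner ℝ (φ ↑i) x : ℝ)‖ ^ 2 := by
                rw [ha]
                simp [mul_pow, Real.norm_eq_abs, sq_abs, real_inner_comm]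
              rw [h5]
              exact mul_le_mul_of_nonneg_right
                (pow_le_pow_left₀ (hnonneg _) (hmono hiN) 2) (by positivity)
          _ = s N ^ 2 * ∑ i ∈ F, ‖(inner ℝ (φ ↑i) x : ℝ)‖ ^ 2 := by rw [Finset.mul_sum]
          _ ≤ s N ^ 2 * ‖x‖ ^ 2 :=
              mul_le_mul_of_nonneg_left hbessel (by positivity)
      have h6 : ‖∑ i ∈ F, a ↑i • ψ ↑i‖ ^ 2 ≤ (s N * ‖x‖) ^ 2 := by
        rw [hsq, mul_pow]; exact hle
      have h7 := Real.sqrt_le_sqrt h6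
      rwa [Real.sqrt_sq (norm_nonneg _),
        Real.sqrt_sq (mul_nonneg (hnonneg N) (norm_nonneg x))] at h7
    have hhs : HasSum (fun i : ↥((↑(Finset.range N) : Set ℕ)ᶜ) => a ↑i • ψ ↑i)
        (∑' (n : ↥((↑(Finset.range N) : Set ℕ)ᶜ)), a ↑n • ψ ↑n) :=
      (hsummable.subtype _).hasSum
    exact le_of_tendsto' hhs.norm (fun F => hbound F)
  have hBub : ‖T - B‖ ≤ s N := ContinuousLinearMap.opNorm_le_bound _ (hnonneg N) hub
  have hBnorm : ‖T - B‖ = s N := le_antisymm hBub (part1 B hBrank)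
  refine ⟨part1, ?_, ⟨B, hBrank, hB, hBnorm⟩⟩
  haveI : Nonempty {T' : H₁ →L[ℝ] H₂ //
      Module.rank ℝ (LinearMap.range (T' : H₁ →ₗ[ℝ] H₂)) ≤ N} :=
    ⟨⟨0, by simp⟩⟩
  apply le_antisymm
  · exact (ciInf_le ⟨0, fun y ⟨i, hi⟩ => hi ▸ norm_nonneg _⟩
      (⟨B, hBrank⟩ : {T' : H₁ →L[ℝ] H₂ //
        Module.rank ℝ (LinearMap.range (T' : H₁ →ₗ[ℝ] H₂)) ≤ N})).trans_eq hBnorm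
  · exact le_ciInf fun i => part1 i.1 i.2
end

section
/- For the Volterra operator (Af)(t) = ∫_t^T k e^{-α(ρ-t)} f(ρ) dρ on L²(0,T) with k > 0, α ∈ ℝ, any eigenpair of A*A with eigenvalue μ > 0 satisfies the Sturm–Liouville problem −f''(t) + α² f(t) = (k²/μ) f(t) on (0,T) with boundary conditions f(0) = 0 and f'(T) + α f(T) = 0; conversely every solution of this boundary value problem with k²/μ > α² yields an eigenfunction of A*A with eigenvalue μ. -/
open Set

/-- The Volterra operator `(Af)(t) = ∫_t^T k e^{-α(ρ-t)} f(ρ) dρ`. -/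
noncomputable def volterraA (k α T : ℝ) (f : ℝ → ℝ) : ℝ → ℝ :=
  fun t => ∫ ρ in Ioc t T, k * Real.exp (-α * (ρ - t)) * f ρ

/-- The adjoint Volterra operator `(A*f)(t) = ∫_0^t k e^{-α(t-ρ)} f(ρ) dρ`. -/
noncomputable def volterraAstar (k α : ℝ) (f : ℝ → ℝ) : ℝ → ℝ :=
  fun t => ∫ ρ in Ioc 0 t, k * Real.exp (-α * (t - ρ)) * f ρ

namespace Stmt15Aux

open MeasureTheory intervalIntegral

variable (k α T : ℝ) (f : ℝ → ℝ)

/-- primitive of `e^{-ασ} f σ` -/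
noncomputable def phi (x : ℝ) : ℝ := ∫ σ in (0:ℝ)..x, Real.exp (-(α*σ)) * f σ

noncomputable def Gf (x : ℝ) : ℝ := phi α f T - phi α f x

noncomputable def Pf (t : ℝ) : ℝ := ∫ ρ in (0:ℝ)..t, Real.exp (2*α*ρ) * Gf α T f ρ

noncomputable def Ff (t : ℝ) : ℝ := k^2 * Real.exp (-(α*t)) * Pf α T f t

noncomputable def F1 (t : ℝ) : ℝ :=
  -α * Ff k α T f t + k^2 * Real.exp (α*t) * Gf α T f t

variable {f}

lemma cont_integrand (hf : Continuous f) :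
    Continuous (fun σ => Real.exp (-(α*σ)) * f σ) := by
  exact ((Real.continuous_exp.comp (by continuity)).mul hf)

lemma hasDerivAt_phi (hf : Continuous f) (x : ℝ) :
    HasDerivAt (phi α f) (Real.exp (-(α*x)) * f x) x := by
  exact integral_hasDerivAt_right
    ((cont_integrand α hf).intervalIntegrable _ _)
    (cont_integrand α hf).aestronglyMeasurable.stronglyMeasurableAtFilter
    (cont_integrand α hf).continuousAt

lemma hasDerivAt_G (hf : Continuous f) (x : ℝ) :
    HasDerivAt (Gf α T f) (-(Real.exp (-(α*x)) * f x)) x := by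
  exact ((hasDerivAt_const x (phi α f T)).sub (hasDerivAt_phi α hf x)).congr_deriv (by simp)

lemma continuous_G (hf : Continuous f) : Continuous (Gf α T f) := by
  have : Differentiable ℝ (Gf α T f) := fun x => (hasDerivAt_G α T hf x).differentiableAt
  exact this.continuous

lemma hasDerivAt_P (hf : Continuous f) (t : ℝ) :
    HasDerivAt (Pf α T f) (Real.exp (2*α*t) * Gf α T f t) t := by
  have hc : Continuous (fun ρ => Real.exp (2*α*ρ) * Gf α T f ρ) :=
    (Real.continuous_exp.comp (by continuity)).mul (continuous_G α T hf)
  exact integral_hasDerivAt_right (hc.intervalIntegrable _ _)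
    hc.aestronglyMeasurable.stronglyMeasurableAtFilter hc.continuousAt

lemma hasDerivAt_expNeg (α : ℝ) (t : ℝ) :
    HasDerivAt (fun x => Real.exp (-(α*x))) (-α * Real.exp (-(α*t))) t := by
  have h0 : HasDerivAt (fun x : ℝ => -(α*x)) (-α) t := by
    exact ((hasDerivAt_id t).const_mul α).neg.congr_deriv (by simp)
  simpa [mul_comm] using h0.exp

lemma hasDerivAt_expPos (α : ℝ) (t : ℝ) :
    HasDerivAt (fun x => Real.exp (α*x)) (α * Real.exp (α*t)) t := by
  have h0 : HasDerivAt (fun x : ℝ => α*x) α t := by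
    simpa using (hasDerivAt_id t).const_mul α
  simpa [mul_comm] using h0.exp

lemma hasDerivAt_F (hf : Continuous f) (t : ℝ) :
    HasDerivAt (Ff k α T f) (F1 k α T f t) t := by
  have hfun : Ff k α T f = fun y => k^2 * (Real.exp (-(α*y)) * Pf α T f y) :=
    funext fun y => by rw [Ff]; ring
  have h2 := ((hasDerivAt_expNeg α t).mul (hasDerivAt_P α T hf t)).const_mul (k^2)
  rw [hfun]
  refine HasDerivAt.congr_deriv h2 (Eq.symm ?_)
  have hexp : Real.exp (-(α*t)) * Real.exp (2*α*t) = Real.exp (α*t) := by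
    rw [← Real.exp_add]; ring_nf
  simp only [F1, Ff]
  linear_combination (-(k^2 * Gf α T f t)) * hexp

lemma hasDerivAt_F1 (hf : Continuous f) (t : ℝ) :
    HasDerivAt (F1 k α T f) (α^2 * Ff k α T f t - k^2 * f t) t := by
  have hfun : F1 k α T f
      = fun y => (-α) * Ff k α T f y + k^2 * (Real.exp (α*y) * Gf α T f y) :=
    funext fun y => by rw [F1]; ring
  have h1 := (hasDerivAt_F k α T hf t).const_mul (-α)
  have h3 := (((hasDerivAt_expPos α t).mul (hasDerivAt_G α T hf t)).const_mul (k^2))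
  have h4 := h1.add h3
  rw [hfun]
  refine HasDerivAt.congr_deriv h4 (Eq.symm ?_)
  have hexp : Real.exp (α*t) * Real.exp (-(α*t)) = 1 := by
    rw [← Real.exp_add]; simp
  simp only [F1]
  linear_combination (k^2 * f t) * hexp

/-- key rewrite: on `[0,T]`, `A*(A f) = Ff`. -/
lemma key (hk : 0 < k) (hf : Continuous f) {t : ℝ} (ht : t ∈ Icc 0 T) :
    volterraAstar k α (volterraA k α T f) t = Ff k α T f t := by
  have hInt : IntervalIntegrable (fun σ => Real.exp (-(α*σ)) * f σ) volume 0 T :=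
    (cont_integrand α hf).intervalIntegrable _ _
  have hA : ∀ ρ ∈ Icc (0:ℝ) T,
      volterraA k α T f ρ = k * Real.exp (α*ρ) * Gf α T f ρ := by
    intro ρ hρ
    have h1 : volterraA k α T f ρ
        = ∫ σ in Ioc ρ T, (k * Real.exp (α*ρ)) * (Real.exp (-(α*σ)) * f σ) := by
      simp only [volterraA]
      apply setIntegral_congr_fun measurableSet_Ioc
      intro σ _
      simp only
      rw [show -α * (σ - ρ) = α*ρ + -(α*σ) by ring, Real.exp_add]; ring
    rw [h1, MeasureTheory.integral_const_mul]
    have h2 : ∫ σ in Ioc ρ T, Real.exp (-(α*σ)) * f σ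
        = ∫ σ in ρ..T, Real.exp (-(α*σ)) * f σ :=
      (intervalIntegral.integral_of_le hρ.2).symm
    have h3 : Gf α T f ρ = ∫ σ in ρ..T, Real.exp (-(α*σ)) * f σ := by
      rw [Gf, phi, phi, intervalIntegral.integral_interval_sub_left hInt
        ((cont_integrand α hf).intervalIntegrable _ _)]
    rw [h2, ← h3]
  have h4 : volterraAstar k α (volterraA k α T f) t
      = ∫ ρ in Ioc 0 t, (k^2 * Real.exp (-(α*t))) * (Real.exp (2*α*ρ) * Gf α T f ρ) := by
    simp only [volterraAstar]
    apply setIntegral_congr_fun measurableSet_Ioc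
    intro ρ hρ
    have hρ' : ρ ∈ Icc (0:ℝ) T := ⟨hρ.1.le, hρ.2.trans ht.2⟩
    simp only
    rw [hA ρ hρ']
    rw [show -α * (t - ρ) = -(α*t) + α*ρ by ring, Real.exp_add]
    rw [show 2*α*ρ = α*ρ + α*ρ by ring, Real.exp_add]; ring
  rw [h4, MeasureTheory.integral_const_mul, Ff, Pf,
    intervalIntegral.integral_of_le ht.1]

lemma GT_zero : Gf α T f T = 0 := sub_self _

lemma F_zero : Ff k α T f 0 = 0 := by
  simp [Ff, Pf]

/-- if two functions agree on `Icc a b` and both have (full) derivatives at a point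
of `Icc a b`, the derivatives agree. -/
lemma deriv_eq_on {F G : ℝ → ℝ} {a b : ℝ} (hab : a < b)
    (h : ∀ x ∈ Icc a b, F x = G x) {x : ℝ} (hx : x ∈ Icc a b) {d e : ℝ}
    (hF : HasDerivAt F d x) (hG : HasDerivAt G e x) : d = e := by
  have h1 : HasDerivWithinAt F d (Icc a b) x := hF.hasDerivWithinAt
  have h2 : HasDerivWithinAt F e (Icc a b) x :=
    (hG.hasDerivWithinAt).congr (fun y hy => h y hy) (h x hx)
  have hu := uniqueDiffOn_Icc hab x hx
  rw [← h1.derivWithin hu, ← h2.derivWithin hu]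

lemma const_of_hasDerivAt_zero {u : ℝ → ℝ} {a b : ℝ} (hab : a < b)
    (h : ∀ x ∈ Icc a b, HasDerivAt u 0 x) : ∀ x ∈ Icc a b, u x = u a := by
  apply constant_of_derivWithin_zero
  · exact fun x hx => (h x hx).hasDerivWithinAt.differentiableWithinAt
  · intro x hx
    exact (h x (mem_Icc_of_Ico hx)).hasDerivWithinAt.derivWithin
      (uniqueDiffOn_Icc hab x (mem_Icc_of_Ico hx))

end Stmt15Aux

open Stmt15Aux MeasureTheory

theorem stmt15 (k α T μ : ℝ) (hk : 0 < k) (hT : 0 < T) (hμ : 0 < μ)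
    (f : ℝ → ℝ) (hf : ContDiff ℝ 2 f) :
    ((∀ t ∈ Icc 0 T, volterraAstar k α (volterraA k α T f) t = μ * f t) →
      ((∀ t ∈ Icc 0 T, -(deriv (deriv f) t) + α ^ 2 * f t = (k ^ 2 / μ) * f t) ∧
        f 0 = 0 ∧ deriv f T + α * f T = 0)) ∧
    (k ^ 2 / μ > α ^ 2 →
      (∀ t ∈ Icc 0 T, -(deriv (deriv f) t) + α ^ 2 * f t = (k ^ 2 / μ) * f t) →
      f 0 = 0 → deriv f T + α * f T = 0 →
      ∀ t ∈ Icc 0 T, volterraAstar k α (volterraA k α T f) t = μ * f t) := by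
  have hfc : Continuous f := hf.continuous
  have hf2 : ContDiff ℝ (1+1) f := by norm_num; exact hf
  obtain ⟨hfd, -, hfd1⟩ := contDiff_succ_iff_deriv.mp hf2
  have hfd2 : Differentiable ℝ (deriv f) := hfd1.differentiable (by norm_num)
  constructor
  · -- forward direction
    intro H
    have hF : ∀ t ∈ Icc 0 T, Ff k α T f t = μ * f t := fun t ht =>
      (key k α T hk hfc ht).symm.trans (H t ht)
    have hf0 : f 0 = 0 := by
      have := hF 0 ⟨le_rfl, hT.le⟩
      rw [F_zero] at this
      have := this.symm
      rcases mul_eq_zero.mp this with h | h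
      · exact absurd h hμ.ne'
      · exact h
    have hd1 : ∀ t ∈ Icc 0 T, F1 k α T f t = μ * deriv f t := by
      intro t ht
      exact deriv_eq_on hT hF ht (hasDerivAt_F k α T hfc t)
        (((hfd t).hasDerivAt).const_mul μ)
    have hd2 : ∀ t ∈ Icc 0 T,
        α^2 * Ff k α T f t - k^2 * f t = μ * deriv (deriv f) t := by
      intro t ht
      exact deriv_eq_on hT hd1 ht (hasDerivAt_F1 k α T hfc t)
        (((hfd2 t).hasDerivAt).const_mul μ)
    refine ⟨?_, hf0, ?_⟩
    · intro t ht
      have h1 := hd2 t ht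
      rw [hF t ht] at h1
      have hμ' : μ ≠ 0 := hμ.ne'
      field_simp
      nlinarith [h1]
    · have h1 := hd1 T ⟨hT.le, le_rfl⟩
      have h2 : F1 k α T f T = -α * (μ * f T) := by
        rw [F1, GT_zero, hF T ⟨hT.le, le_rfl⟩]; ring
      rw [h2] at h1
      have hμ' : μ ≠ 0 := hμ.ne'
      have : μ * (deriv f T + α * f T) = 0 := by linarith
      rcases mul_eq_zero.mp this with h | h
      · exact absurd h hμ'
      · exact h
  · -- converse direction
    intro _ hODE hf0 hfT t ht
    rw [key k α T hk hfc ht]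
    -- show Ff = μ f on Icc 0 T
    set w : ℝ → ℝ := fun t => Ff k α T f t - μ * f t with hw
    have hw' : ∀ t, HasDerivAt w (F1 k α T f t - μ * deriv f t) t := fun t =>
      (hasDerivAt_F k α T hfc t).sub (((hfd t).hasDerivAt).const_mul μ)
    set v : ℝ → ℝ := fun t => (F1 k α T f t - μ * deriv f t) + α * w t with hv
    have hf''icc : ∀ s ∈ Icc (0:ℝ) T, μ * deriv (deriv f) s = α^2 * (μ * f s) - k^2 * f s := by
      intro s hs
      have h := hODE s hs
      have hμ' : μ ≠ 0 := hμ.ne'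
      field_simp at h
      nlinarith [h]
    have hv' : ∀ s ∈ Icc (0:ℝ) T, HasDerivAt v (α * v s) s := by
      intro s hs
      have h1 : HasDerivAt v
          ((α^2 * Ff k α T f s - k^2 * f s - μ * deriv (deriv f) s)
            + α * (F1 k α T f s - μ * deriv f s)) s :=
        ((hasDerivAt_F1 k α T hfc s).sub (((hfd2 s).hasDerivAt).const_mul μ)).add
          ((hw' s).const_mul α)
      convert h1 using 1
      have h2 := hf''icc s hs
      simp only [hv, hw]
      linarith
    have hvT : v T = 0 := by
      simp only [hv, hw, F1, GT_zero]
      nlinarith [hfT]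
    -- v = 0 on Icc via u = exp(-α t) * v t
    have hexp1 : ∀ s : ℝ, HasDerivAt (fun x => Real.exp (-(α*x))) (-α * Real.exp (-(α*s))) s :=
      hasDerivAt_expNeg α
    have hv0 : ∀ s ∈ Icc (0:ℝ) T, v s = 0 := by
      set u : ℝ → ℝ := fun x => Real.exp (-(α*x)) * v x with hu
      have hu' : ∀ s ∈ Icc (0:ℝ) T, HasDerivAt u 0 s := by
        intro s hs
        have := (hexp1 s).mul (hv' s hs)
        refine HasDerivAt.congr_deriv this (Eq.symm ?_)
        ring
      have hconst := const_of_hasDerivAt_zero hT hu'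
      have huT : u T = 0 := by simp [hu, hvT]
      have hu0 : u 0 = 0 := by rw [← hconst T ⟨hT.le, le_rfl⟩]; exact huT
      intro s hs
      have := (hconst s hs).trans hu0
      have hne : Real.exp (-(α*s)) ≠ 0 := (Real.exp_pos _).ne'
      simpa [hu, hne] using this
    -- now w = 0 on Icc via z = exp(α t) * w
    have hexp2 : ∀ s : ℝ, HasDerivAt (fun x => Real.exp (α*x)) (α * Real.exp (α*s)) s :=
      hasDerivAt_expPos α
    have hw0 : ∀ s ∈ Icc (0:ℝ) T, w s = 0 := by
      set z : ℝ → ℝ := fun x => Real.exp (α*x) * w x with hz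
      have hz' : ∀ s ∈ Icc (0:ℝ) T, HasDerivAt z 0 s := by
        intro s hs
        have h1 := (hexp2 s).mul (hw' s)
        have h2 : F1 k α T f s - μ * deriv f s = v s - α * w s := by
          simp only [hv]; ring
        rw [h2, hv0 s hs] at h1
        refine HasDerivAt.congr_deriv h1 (Eq.symm ?_)
        simp only [hw]; ring
      have hconst := const_of_hasDerivAt_zero hT hz'
      have hz0 : z 0 = 0 := by
        simp [hz, hw, F_zero, hf0]
      intro s hs
      have := (hconst s hs).trans hz0
      have hne : Real.exp (α*s) ≠ 0 := (Real.exp_pos _).ne'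
      simpa [hz, hne] using this
    have := hw0 t ht
    simp only [hw] at this
    linarith
end
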